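/- Let (R,𝔪) be a Noetherian local ring, J₁ ⊆ R an ideal generated by elements of I \ I² where I = J₁ + J₂ for an ideal J₂. Then the pair J₁ ⊆ I is Aluffi torsion-free (J₁ ∩ Iⁿ = J₁·Iⁿ⁻¹ for all n) if and only if for every n ≥ 1 the natural surjection Iⁿ/(Iⁿ⁺¹ + J₁·Iⁿ⁻¹) → Iⁿ/(Iⁿ⁺¹ + Iⁿ ∩ J₁) is an isomorphism. -/

import Mathlib

/-- In a Noetherian local ring, an ideal `M` is closed for the `I`-adic topology
when `I ≠ ⊤`: if `x ∈ M + I^k` for all `k`, then `x ∈ M`. -/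
lemma mem_of_forall_mem_add_pow {R : Type*} [CommRing R] [IsNoetherianRing R]
    [IsLocalRing R] (I M : Ideal R) (hI : I ≠ ⊤) {x : R}
    (hx : ∀ k : ℕ, x ∈ M + I ^ k) : x ∈ M := by
  have hbot : (⨅ i : ℕ, I ^ i • ⊤ : Submodule R (R ⧸ M)) = ⊥ :=
    I.iInf_pow_smul_eq_bot_of_isLocalRing hI
  have hmem : Ideal.Quotient.mk M x ∈ (⨅ i : ℕ, I ^ i • ⊤ : Submodule R (R ⧸ M)) := by
    rw [Submodule.mem_iInf]
    intro k
    obtain ⟨m, hm, i, hi, rfl⟩ := Submodule.mem_sup.mp (hx k)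
    have h1 : Ideal.Quotient.mk M (m + i) = i • (1 : R ⧸ M) := by
      have h2 : i • (1 : R ⧸ M) = Ideal.Quotient.mk M i := by
        rw [Algebra.smul_def, mul_one]
        rfl
      rw [h2, map_add, Ideal.Quotient.eq_zero_iff_mem.mpr hm, zero_add]
    rw [h1]
    exact Submodule.smul_mem_smul hi Submodule.mem_top
  rw [hbot, Submodule.mem_bot] at hmem
  exact Ideal.Quotient.eq_zero_iff_mem.mp hmem

/-- Tangent-cone criterion: for a Noetherian local ring, `J₁` generated by elements of
`I \ I²` with `I = J₁ + J₂`, the pair `J₁ ⊆ I` is Aluffi torsion-free iff for every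
`n ≥ 1` the natural surjection `Iⁿ/(Iⁿ⁺¹ + J₁·Iⁿ⁻¹) → Iⁿ/(Iⁿ⁺¹ + Iⁿ ∩ J₁)` is an
isomorphism, i.e. the two kernels agree: `Iⁿ⁺¹ + J₁·Iⁿ⁻¹ = Iⁿ⁺¹ + (Iⁿ ⊓ J₁)`. -/
theorem aluffi_torsion_free_iff_gr_iso {R : Type*} [CommRing R] [IsNoetherianRing R]
    [IsLocalRing R] (J₁ J₂ I : Ideal R) (hI : I = J₁ + J₂)
    (hgen : ∃ S : Set R, J₁ = Ideal.span S ∧ ∀ s ∈ S, s ∈ I ∧ s ∉ I ^ 2) :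
    (∀ n : ℕ, 1 ≤ n → J₁ ⊓ I ^ n = J₁ * I ^ (n - 1)) ↔
      (∀ n : ℕ, 1 ≤ n →
        I ^ (n + 1) + J₁ * I ^ (n - 1) = I ^ (n + 1) + (I ^ n ⊓ J₁)) := by
  have hJI : J₁ ≤ I := by rw [hI]; exact le_sup_left
  constructor
  · intro h n hn
    rw [← h n hn, inf_comm]
  · intro h n hn
    -- degenerate case I = ⊤ : then J₁ = ⊥
    by_cases hItop : I = ⊤
    · obtain ⟨S, hS, hS2⟩ := hgen
      have hSe : S = ∅ := by
        ext s
        simp only [Set.mem_empty_iff_false, iff_false]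
        intro hs
        exact (hS2 s hs).2 (by rw [hItop, Ideal.top_pow]; trivial)
      rw [hS, hSe, Ideal.span_empty]
      simp
    -- main case
    refine le_antisymm ?_ ?_
    · -- J₁ ⊓ Iⁿ ≤ J₁ * Iⁿ⁻¹
      have step : ∀ m : ℕ, 1 ≤ m →
          J₁ ⊓ I ^ m ≤ (J₁ ⊓ I ^ (m + 1)) + J₁ * I ^ (m - 1) := by
        intro m hm x hx
        have hx' : x ∈ I ^ (m + 1) + J₁ * I ^ (m - 1) := by
          rw [h m hm]
          exact Submodule.mem_sup_right ⟨hx.2, hx.1⟩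
        obtain ⟨a, ha, b, hb, rfl⟩ := Submodule.mem_sup.mp hx'
        have hbJ : b ∈ J₁ := Ideal.mul_le_left hb
        have haJ : a ∈ J₁ := by
          have h2 : a = (a + b) - b := by ring
          rw [h2]; exact Ideal.sub_mem _ hx.1 hbJ
        exact Submodule.add_mem_sup ⟨haJ, ha⟩ hb
      have claim : ∀ k : ℕ,
          J₁ ⊓ I ^ n ≤ J₁ * I ^ (n - 1) + (J₁ ⊓ I ^ (n + k)) := by
        intro k
        induction k with
        | zero => exact le_sup_right
        | succ k ih =>
          have hmul : J₁ * I ^ (n + k - 1) ≤ J₁ * I ^ (n - 1) :=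
            Ideal.mul_mono_right
              (Ideal.pow_le_pow_right (Nat.sub_le_sub_right (Nat.le_add_right n k) 1))
          calc J₁ ⊓ I ^ n ≤ J₁ * I ^ (n - 1) + (J₁ ⊓ I ^ (n + k)) := ih
            _ ≤ J₁ * I ^ (n - 1) +
                ((J₁ ⊓ I ^ (n + k + 1)) + J₁ * I ^ (n + k - 1)) :=
              sup_le_sup_left (step (n + k) (le_trans hn (Nat.le_add_right n k))) _
            _ ≤ J₁ * I ^ (n - 1) + (J₁ ⊓ I ^ (n + (k + 1))) :=
              sup_le le_sup_left (sup_le le_sup_right (hmul.trans le_sup_left))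
      intro x hx
      refine mem_of_forall_mem_add_pow I _ hItop (fun k => ?_)
      have := claim k hx
      rcases Submodule.mem_sup.mp this with ⟨a, ha, b, hb, rfl⟩
      exact Submodule.add_mem_sup ha
        (Ideal.pow_le_pow_right (Nat.le_add_left k n) hb.2)
    · -- J₁ * Iⁿ⁻¹ ≤ J₁ ⊓ Iⁿ
      refine le_inf Ideal.mul_le_left ?_
      calc J₁ * I ^ (n - 1) ≤ I * I ^ (n - 1) := Ideal.mul_mono_left hJI
        _ = I ^ n := by rw [← pow_succ', Nat.sub_add_cancel hn]
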